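/- A kV₄-module is an indecomposable permutation module if and only if it is isomorphic to one of the five modules: the trivial module k, E_t, E_{t+1}, E_∞, and the regular module kV₄. Equivalently, these are exactly the modules k[V₄/H] for the five subgroups H of V₄, namely H = V₄, ⟨τ⟩, ⟨στ⟩, ⟨σ⟩, {1}. -/

import Mathlib

open Multiplicative

/-! ## The Klein four-group and its group algebra -/

/-- The Klein four-group `V₄ = ⟨σ, τ⟩`. -/
abbrev V4 : Type := Multiplicative (ZMod 2) × Multiplicative (ZMod 2)

/-- The group algebra `kV₄`. -/
abbrev kV4 (k : Type) [Field k] : Type := MonoidAlgebra k V4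

/-- The generator `σ` of `V₄`. -/
def sigma4 : V4 := (ofAdd 1, 1)

/-- The generator `τ` of `V₄`. -/
def tau4 : V4 := (1, ofAdd 1)

/-- The element `a = σ + 1` of `kV₄` (in characteristic 2, `σ + 1 = σ - 1`). -/
noncomputable def aElt (k : Type) [Field k] : kV4 k := MonoidAlgebra.of k V4 sigma4 + 1

/-- The element `b = τ + 1` of `kV₄`. -/
noncomputable def bElt (k : Type) [Field k] : kV4 k := MonoidAlgebra.of k V4 tau4 + 1

/-! ## Building representations of `V₄` -/

/-- A monoid hom out of `Multiplicative (ZMod 2)` determined by an involution. -/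
noncomputable def involHom {M : Type} [Monoid M] (S : M) (hS : S * S = 1) :
    Multiplicative (ZMod 2) →* M where
  toFun g := S ^ (toAdd g).val
  map_one' := by simp
  map_mul' x y := by
    have h2 : S ^ 2 = 1 := by rwa [pow_two]
    have key : ∀ m : ℕ, S ^ (m % 2) = S ^ m := by
      intro m
      conv_rhs => rw [← Nat.div_add_mod m 2]
      rw [pow_add, pow_mul, h2, one_pow, one_mul]
    show S ^ (toAdd (x * y)).val = S ^ (toAdd x).val * S ^ (toAdd y).val
    rw [toAdd_mul, ZMod.val_add, key, pow_add]

/-- The representation of `V₄` determined by two commuting involutions `S` (the action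
of `σ`) and `T` (the action of `τ`). -/
noncomputable def kleinRep (k : Type) [Field k] {V : Type} [AddCommGroup V] [Module k V]
    (S T : Module.End k V) (hS : S * S = 1) (hT : T * T = 1) (hST : S * T = T * S) :
    Representation k V4 V :=
  MonoidHom.noncommCoprod (involHom S hS) (involHom T hT)
    (fun _ _ => Commute.pow_pow (show Commute S T from hST) _ _)

section Pair

variable (k : Type) [Field k]

/-- The endomorphism `(u, v) ↦ (0, f u)` of `(I → k) × (J → k)`. -/
noncomputable def auxEnd {I J : Type} (f : (I → k) →ₗ[k] (J → k)) :
    Module.End k ((I → k) × (J → k)) :=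
  (LinearMap.inr k (I → k) (J → k)).comp (f.comp (LinearMap.fst k (I → k) (J → k)))

lemma auxEnd_mul {I J : Type} (f g : (I → k) →ₗ[k] (J → k)) :
    auxEnd k f * auxEnd k g = 0 := by
  apply LinearMap.ext
  intro x
  simp [auxEnd, Module.End.mul_apply]

lemma end_add_self {V : Type} [AddCommGroup V] [Module k V] [CharP k 2]
    (A : Module.End k V) : A + A = 0 := by
  rw [← two_smul k A]
  have h2 : (2 : k) = 0 := by exact_mod_cast CharP.cast_eq_zero k 2
  rw [h2, zero_smul]

lemma one_add_sq [CharP k 2] {V : Type} [AddCommGroup V] [Module k V]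
    (A : Module.End k V) (hA : A * A = 0) : (1 + A) * (1 + A) = 1 := by
  have h : (1 + A) * (1 + A) = 1 + (A + A) + A * A := by noncomm_ring
  rw [h, end_add_self, hA, add_zero, add_zero]

lemma one_add_comm {V : Type} [AddCommGroup V] [Module k V]
    (A B : Module.End k V) (hAB : A * B = 0) (hBA : B * A = 0) :
    (1 + A) * (1 + B) = (1 + B) * (1 + A) := by
  have h1 : (1 + A) * (1 + B) = 1 + A + B + A * B := by noncomm_ring
  have h2 : (1 + B) * (1 + A) = 1 + A + B + B * A := by noncomm_ring
  rw [h1, h2, hAB, hBA]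

/-- The representation of `V₄` on `(I → k) × (J → k)` (`I` indexing the `u`-basis and
`J` the `v`-basis) on which `a` acts by `(u, v) ↦ (0, f u)` and `b` acts by
`(u, v) ↦ (0, g u)`; equivalently `σ = 1 + a`, `τ = 1 + b`. -/
noncomputable def pairRep [CharP k 2] (I J : Type) (f g : (I → k) →ₗ[k] (J → k)) :
    Representation k V4 ((I → k) × (J → k)) :=
  kleinRep k (1 + auxEnd k f) (1 + auxEnd k g)
    (one_add_sq k _ (auxEnd_mul k f f)) (one_add_sq k _ (auxEnd_mul k g g))
    (one_add_comm k _ _ (auxEnd_mul k f g) (auxEnd_mul k g f))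

end Pair

/-! ## The indecomposable `kV₄`-modules -/

section Modules

variable (k : Type) [Field k] [CharP k 2]

/-- `a`-action for `M_{2n+1}`: `a • u_i = v_{i-1}` for `1 ≤ i ≤ n`; here `u_{i+1}` is
indexed by `i : Fin n` and `v_j` by `j : Fin (n+1)`. -/
noncomputable def MaMap (n : ℕ) : (Fin n → k) →ₗ[k] (Fin (n + 1) → k) :=
  LinearMap.pi fun j =>
    if h : (j : ℕ) < n then LinearMap.proj (⟨(j : ℕ), h⟩ : Fin n) else 0

/-- `b`-action for `M_{2n+1}`: `b • u_i = v_i` for `1 ≤ i ≤ n`. -/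
noncomputable def MbMap (n : ℕ) : (Fin n → k) →ₗ[k] (Fin (n + 1) → k) :=
  LinearMap.pi fun j =>
    if _ : (j : ℕ) = 0 then 0
    else LinearMap.proj (⟨(j : ℕ) - 1, by have := j.isLt; omega⟩ : Fin n)

/-- The representation `M_{2n+1}`. -/
noncomputable def MRep (n : ℕ) : Representation k V4 ((Fin n → k) × (Fin (n + 1) → k)) :=
  pairRep k (Fin n) (Fin (n + 1)) (MaMap k n) (MbMap k n)

/-- The `kV₄`-module `M_{2n+1}`. -/
@[reducible] noncomputable def Mmod (n : ℕ) := (MRep k n).asModule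

/-- `a`-action for `W_{2n+1}`: `a • u_i = v_i` for `1 ≤ i ≤ n`, `a • u_0 = 0`; here `u_i`
is indexed by `i : Fin (n+1)` and `v_{j+1}` by `j : Fin n`. -/
noncomputable def WaMap (n : ℕ) : (Fin (n + 1) → k) →ₗ[k] (Fin n → k) :=
  LinearMap.pi fun j =>
    LinearMap.proj (⟨(j : ℕ) + 1, by have := j.isLt; omega⟩ : Fin (n + 1))

/-- `b`-action for `W_{2n+1}`: `b • u_i = v_{i+1}` for `0 ≤ i ≤ n-1`, `b • u_n = 0`. -/
noncomputable def WbMap (n : ℕ) : (Fin (n + 1) → k) →ₗ[k] (Fin n → k) :=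
  LinearMap.pi fun j =>
    LinearMap.proj (⟨(j : ℕ), by have := j.isLt; omega⟩ : Fin (n + 1))

/-- The representation `W_{2n+1}`. -/
noncomputable def WRep (n : ℕ) : Representation k V4 ((Fin (n + 1) → k) × (Fin n → k)) :=
  pairRep k (Fin (n + 1)) (Fin n) (WaMap k n) (WbMap k n)

/-- The `kV₄`-module `W_{2n+1}`. -/
@[reducible] noncomputable def Wmod (n : ℕ) := (WRep k n).asModule

/-- `b`-action for `E_{f,n}` with `f ≠ ∞`, where `m = n·deg f` and `α` is the list of lower
coefficients of `f^n`: `b • u_i = v_{i+1}` for `i ≤ m-2` and `b • u_{m-1} = Σ α_i v_i`. -/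
noncomputable def EbMap (m : ℕ) (α : Fin m → k) : (Fin m → k) →ₗ[k] (Fin m → k) :=
  LinearMap.pi fun j =>
    (if _ : (j : ℕ) = 0 then 0
     else LinearMap.proj (⟨(j : ℕ) - 1, by have := j.isLt; omega⟩ : Fin m))
    + α j • LinearMap.proj (⟨m - 1, by have := j.isLt; omega⟩ : Fin m)

/-- The representation `E_{f,n}` (for `f ≠ ∞`), where `a • u_i = v_i`. -/
noncomputable def ERep (m : ℕ) (α : Fin m → k) : Representation k V4 ((Fin m → k) × (Fin m → k)) :=
  pairRep k (Fin m) (Fin m) LinearMap.id (EbMap k m α)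

/-- The `kV₄`-module `E_{f,n}` (for `f ≠ ∞`), presented by the coefficient vector `α` of
`f^n` below its leading term, with `m = n·deg f`. -/
@[reducible] noncomputable def Emod (m : ℕ) (α : Fin m → k) := (ERep k m α).asModule

/-- `a`-action for `E_{∞,n}`: `a • u_i = v_{i-1}` for `1 ≤ i ≤ n-1`, `a • u_0 = 0`. -/
noncomputable def EinfaMap (n : ℕ) : (Fin n → k) →ₗ[k] (Fin n → k) :=
  LinearMap.pi fun j =>
    if h : (j : ℕ) + 1 < n then LinearMap.proj (⟨(j : ℕ) + 1, h⟩ : Fin n) else 0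

/-- The representation `E_{∞,n}`, where `b • u_i = v_i`. -/
noncomputable def EinfRep (n : ℕ) : Representation k V4 ((Fin n → k) × (Fin n → k)) :=
  pairRep k (Fin n) (Fin n) (EinfaMap k n) LinearMap.id

/-- The `kV₄`-module `E_{∞,n}`. -/
@[reducible] noncomputable def Einfmod (n : ℕ) := (EinfRep k n).asModule

/-- The trivial `kV₄`-module `k`. -/
@[reducible] noncomputable def trivMod := (Representation.trivial k (G := V4) (V := k)).asModule

/-- The `kV₄`-module `E_t = E_{t,1}`. -/
@[reducible] noncomputable def EtMod := Emod k 1 0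

/-- The `kV₄`-module `E_{t+1} = E_{t+1,1}`. -/
@[reducible] noncomputable def Et1Mod := Emod k 1 1

/-- The `kV₄`-module `E_∞ = E_{∞,1}`. -/
@[reducible] noncomputable def EinfMod := Einfmod k 1

end Modules

/-! ## Permutation modules, resolutions and the permutation dimension -/

section Perm

variable (k : Type) [Field k]

/-- A `kV₄`-module is a permutation module if it is isomorphic to `k[X]` for some finite
`V₄`-set `X` (equivalently, it admits a finite `k`-basis permuted by `V₄`). -/
def IsPermMod (M : Type) [AddCommMonoid M] [Module (kV4 k) M] : Prop :=
  ∃ (ι : Type) (_ : Fintype ι) (act : MulAction V4 ι),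
    Nonempty (M ≃ₗ[kV4 k] (@Representation.ofMulAction k _ V4 _ ι act).asModule)

/-- A permutation resolution `0 → P_n → ⋯ → P_1 → P_0 → M → 0` of length at most `n`:
an exact sequence of `kV₄`-modules in which every `P_i` is a permutation module and
`P_i = 0` for `i > n`. -/
structure PermRes (M : Type) [AddCommMonoid M] [Module (kV4 k) M] (n : ℕ) where
  P : ℕ → Type
  [acm : ∀ i, AddCommMonoid (P i)]
  [mod : ∀ i, Module (kV4 k) (P i)]
  d : ∀ i, P (i + 1) →ₗ[kV4 k] P i
  ε : P 0 →ₗ[kV4 k] M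
  perm : ∀ i, IsPermMod k (P i)
  surj : Function.Surjective ε
  exact_zero : LinearMap.ker ε = LinearMap.range (d 0)
  exact_succ : ∀ i, LinearMap.ker (d i) = LinearMap.range (d (i + 1))
  bounded : ∀ i, n < i → ∀ x : P i, x = 0

/-- The permutation dimension of a `kV₄`-module: the least length of a permutation
resolution. -/
noncomputable def ppdim (M : Type) [AddCommMonoid M] [Module (kV4 k) M] : ℕ :=
  sInf {n : ℕ | Nonempty (PermRes k M n)}

/-- `SES k A B C` asserts the existence of a short exact sequence
`0 → A → B → C → 0` of `kV₄`-modules. -/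
def SES (A B C : Type) [AddCommMonoid A] [AddCommMonoid B] [AddCommMonoid C]
    [Module (kV4 k) A] [Module (kV4 k) B] [Module (kV4 k) C] : Prop :=
  ∃ (f : A →ₗ[kV4 k] B) (g : B →ₗ[kV4 k] C),
    Function.Injective f ∧ Function.Surjective g ∧ LinearMap.range f = LinearMap.ker g

end Perm

/-- A nonzero module is indecomposable if it is not the (internal) direct sum of two
nonzero submodules. -/
def IsIndecomposable (R M : Type) [Ring R] [AddCommMonoid M] [Module R M] : Prop :=
  Nontrivial M ∧ ∀ N₁ N₂ : Submodule R M, IsCompl N₁ N₂ → N₁ = ⊥ ∨ N₂ = ⊥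

/-- A `kV₄`-module is projective-free if it has no direct summand isomorphic to the
regular module `kV₄`. -/
def IsProjFree (k : Type) [Field k] (M : Type) [AddCommMonoid M] [Module (kV4 k) M] : Prop :=
  ¬ ∃ (N N' : Submodule (kV4 k) M), IsCompl N N' ∧ Nonempty (N ≃ₗ[kV4 k] kV4 k)


/-! ## Statement -/


/-! ## Auxiliary lemmas -/

section Helpers

/-- Module equiv from an equivariant linear equiv. -/
noncomputable def reprEquiv {k G V W : Type} [Field k] [Monoid G] [AddCommMonoid V] [Module k V]
    [AddCommMonoid W] [Module k W] (ρ : Representation k G V) (π : Representation k G W)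
    (e : V ≃ₗ[k] W) (h : ∀ g v, e (ρ g v) = π g (e v)) :
    ρ.asModule ≃ₗ[MonoidAlgebra k G] π.asModule where
  toFun := e
  invFun := e.symm
  left_inv := e.left_inv
  right_inv := e.right_inv
  map_add' := e.map_add
  map_smul' := by
    intro r (x : V)
    show e (ρ.asAlgebraHom r x) = π.asAlgebraHom r (e x)
    induction r using MonoidAlgebra.induction with
    | zero => simp
    | single_add g c f _ _ ih =>
        rw [map_add, map_add, LinearMap.add_apply, LinearMap.add_apply, map_add, ih,
          Representation.asAlgebraHom_single, Representation.asAlgebraHom_single]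
        simp [h g x]

lemma V4_cases (g : V4) : g = 1 ∨ g = sigma4 ∨ g = tau4 ∨ g = sigma4 * tau4 := by
  revert g; decide

lemma sigma4_mul_self : sigma4 * sigma4 = 1 := by decide
lemma tau4_mul_self : tau4 * tau4 = 1 := by decide
lemma sigma4_ne_one : sigma4 ≠ 1 := by decide
lemma tau4_ne_one : tau4 ≠ 1 := by decide

lemma equivariance_of_gen {k V W : Type} [Field k] [AddCommMonoid V] [Module k V]
    [AddCommMonoid W] [Module k W] (ρ : Representation k V4 V) (π : Representation k V4 W)
    (e : V →ₗ[k] W) (hσ : ∀ v, e (ρ sigma4 v) = π sigma4 (e v))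
    (hτ : ∀ v, e (ρ tau4 v) = π tau4 (e v)) : ∀ g v, e (ρ g v) = π g (e v) := by
  have hmul : ∀ g g', (∀ v, e (ρ g v) = π g (e v)) → (∀ v, e (ρ g' v) = π g' (e v)) →
      ∀ v, e (ρ (g * g') v) = π (g * g') (e v) := by
    intro g g' h1 h2 v
    rw [map_mul, map_mul, Module.End.mul_apply, Module.End.mul_apply, ← h2, ← h1]
  intro g v
  rcases V4_cases g with h | h | h | h <;> subst h
  · simp
  · exact hσ v
  · exact hτ v
  · exact hmul _ _ hσ hτ v

variable {k : Type} [Field k]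

lemma asModule_smul {G V : Type} [Monoid G] [AddCommMonoid V] [Module k V]
    (ρ : Representation k G V) (r : MonoidAlgebra k G) (x : ρ.asModule) :
    r • x = ρ.asAlgebraHom r (x : V) := rfl

lemma asModule_of_smul {G V : Type} [Monoid G] [AddCommMonoid V] [Module k V]
    (ρ : Representation k G V) (g : G) (x : ρ.asModule) :
    MonoidAlgebra.of k G g • x = ρ g (x : V) := by
  rw [asModule_smul, Representation.asAlgebraHom_of]

lemma asModule_algebraMap_smul {G V : Type} [Monoid G] [AddCommMonoid V] [Module k V]
    (ρ : Representation k G V) (c : k) (x : ρ.asModule) :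
    algebraMap k (MonoidAlgebra k G) c • x = c • (x : V) := by
  rw [asModule_smul, AlgHom.commutes]
  simp [Algebra.algebraMap_eq_smul_one]
  rfl

lemma aElt_smul_asModule {V : Type} [AddCommMonoid V] [Module k V]
    (ρ : Representation k V4 V) (x : ρ.asModule) :
    ρ.asModuleEquiv (aElt k • x) =
      ρ sigma4 (ρ.asModuleEquiv x) + ρ.asModuleEquiv x := by
  rw [Representation.asModuleEquiv_map_smul, aElt, map_add, map_one, LinearMap.add_apply,
    Representation.asAlgebraHom_of, Module.End.one_apply]

lemma bElt_smul_asModule {V : Type} [AddCommMonoid V] [Module k V]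
    (ρ : Representation k V4 V) (x : ρ.asModule) :
    ρ.asModuleEquiv (bElt k • x) =
      ρ tau4 (ρ.asModuleEquiv x) + ρ.asModuleEquiv x := by
  rw [Representation.asModuleEquiv_map_smul, bElt, map_add, map_one, LinearMap.add_apply,
    Representation.asAlgebraHom_of, Module.End.one_apply]

variable [CharP k 2]

lemma two_eq_zero_kV4 : (2 : kV4 k) = 0 := by
  have h2 : (1 : k) + 1 = 0 := by
    have := CharP.cast_eq_zero k 2; push_cast at this; rw [← this]; ring
  have : algebraMap k (kV4 k) ((1:k) + 1) = algebraMap k (kV4 k) 0 := by rw [h2]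
  rw [map_add, map_one, map_zero] at this
  rw [show (2 : kV4 k) = 1 + 1 from by norm_num, this]

lemma aElt_mul_aElt : aElt k * aElt k = 0 := by
  have h : aElt k * aElt k = MonoidAlgebra.of k V4 (sigma4 * sigma4) +
      2 * MonoidAlgebra.of k V4 sigma4 + 1 := by
    rw [aElt, map_mul]; ring
  rw [h, sigma4_mul_self, map_one, two_eq_zero_kV4, zero_mul, add_zero, ← two_eq_zero_kV4]
  ring

lemma bElt_mul_bElt : bElt k * bElt k = 0 := by
  have h : bElt k * bElt k = MonoidAlgebra.of k V4 (tau4 * tau4) +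
      2 * MonoidAlgebra.of k V4 tau4 + 1 := by
    rw [bElt, map_mul]; ring
  rw [h, tau4_mul_self, map_one, two_eq_zero_kV4, zero_mul, add_zero, ← two_eq_zero_kV4]
  ring

omit [CharP k 2] in
lemma aElt_mul_bElt_comm : aElt k * bElt k = bElt k * aElt k := by
  exact mul_comm _ _

end Helpers

section Helpers2

variable {k : Type} [Field k]

/-- Transfer of `IsPermMod` along a linear equivalence. -/
lemma isPermMod_of_equiv {M N : Type} [AddCommMonoid M] [AddCommMonoid N]
    [Module (kV4 k) M] [Module (kV4 k) N] (e : M ≃ₗ[kV4 k] N) (h : IsPermMod k N) :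
    IsPermMod k M := by
  obtain ⟨ι, fι, act, ⟨f⟩⟩ := h
  exact ⟨ι, fι, act, ⟨e.trans f⟩⟩

/-- Transfer of `IsIndecomposable` along a linear equivalence. -/
lemma isIndecomposable_of_equiv {R M N : Type} [Ring R] [AddCommMonoid M] [AddCommMonoid N]
    [Module R M] [Module R N] (e : M ≃ₗ[R] N) (h : IsIndecomposable R N) :
    IsIndecomposable R M := by
  obtain ⟨hnt, hind⟩ := h
  constructor
  · obtain ⟨x, y, hxy⟩ := hnt
    exact ⟨e.symm x, e.symm y, fun hh => hxy (by simpa using congrArg e hh)⟩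
  · intro N₁ N₂ hc
    have hc' : IsCompl (N₁.map (e : M →ₗ[R] N)) (N₂.map (e : M →ₗ[R] N)) := by
      have := (Submodule.orderIsoMapComap e).isCompl_iff (x := N₁) (y := N₂)
      simpa [Submodule.orderIsoMapComap] using this.mp hc
    have hbot : ∀ P : Submodule R M, P.map (e : M →ₗ[R] N) = ⊥ → P = ⊥ := by
      intro P hP
      rw [eq_bot_iff]
      intro x hx
      have : e x ∈ P.map (e : M →ₗ[R] N) := ⟨x, hx, rfl⟩
      rw [hP, Submodule.mem_bot] at this
      simpa using congrArg e.symm this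
    rcases hind _ _ hc' with h1 | h1
    · exact Or.inl (hbot _ h1)
    · exact Or.inr (hbot _ h1)

variable [CharP k 2]

/-- Indecomposability via a one-dimensional socle. -/
lemma indec_of_socle {M : Type} [AddCommMonoid M] [Module (kV4 k) M] (s : M) (hs : s ≠ 0)
    (hsoc : ∀ m : M, aElt k • m = 0 → bElt k • m = 0 →
      ∃ c : k, m = algebraMap k (kV4 k) c • s) :
    IsIndecomposable (kV4 k) M := by
  have key : ∀ N : Submodule (kV4 k) M, N ≠ ⊥ → s ∈ N := by
    intro N hN
    obtain ⟨m, hmN, hm⟩ := Submodule.exists_mem_ne_zero_of_ne_bot hN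
    -- produce a nonzero socle element of N
    obtain ⟨t, htN, ht0, hta, htb⟩ :
        ∃ t, t ∈ N ∧ t ≠ 0 ∧ aElt k • t = 0 ∧ bElt k • t = 0 := by
      by_cases hab : aElt k • (bElt k • m) ≠ 0
      · refine ⟨aElt k • (bElt k • m), Submodule.smul_mem _ _ (Submodule.smul_mem _ _ hmN),
          hab, ?_, ?_⟩
        · rw [smul_smul, smul_smul, aElt_mul_aElt, zero_mul, zero_smul]
        · rw [smul_smul, smul_smul, mul_comm (bElt k) (aElt k), mul_assoc, bElt_mul_bElt,
            mul_zero, zero_smul]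
      · push_neg at hab
        by_cases ha : aElt k • m ≠ 0
        · refine ⟨aElt k • m, Submodule.smul_mem _ _ hmN, ha, ?_, ?_⟩
          · rw [smul_smul, aElt_mul_aElt, zero_smul]
          · rw [smul_smul, ← aElt_mul_bElt_comm, ← smul_smul]; exact hab
        · push_neg at ha
          by_cases hb : bElt k • m ≠ 0
          · refine ⟨bElt k • m, Submodule.smul_mem _ _ hmN, hb, ?_, ?_⟩
            · exact hab
            · rw [smul_smul, bElt_mul_bElt, zero_smul]
          · push_neg at hb
            exact ⟨m, hmN, hm, ha, hb⟩
    obtain ⟨c, hc⟩ := hsoc t hta htb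
    have hc0 : c ≠ 0 := by rintro rfl; simp at hc; exact ht0 hc
    have : algebraMap k (kV4 k) c⁻¹ • t = s := by
      rw [hc, smul_smul, ← map_mul, inv_mul_cancel₀ hc0, map_one, one_smul]
    rw [← this]
    exact Submodule.smul_mem _ _ htN
  refine ⟨⟨s, 0, hs⟩, ?_⟩
  intro N₁ N₂ hc
  by_contra hcon
  push_neg at hcon
  have h1 := key N₁ hcon.1
  have h2 := key N₂ hcon.2
  exact hs (by simpa using hc.disjoint.le_bot ⟨h1, h2⟩)

/-- A `G`-invariant `k`-submodule gives a `kV₄`-submodule of `asModule`. -/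
def invariantSubmodule {G V : Type} [Monoid G] [AddCommMonoid V] [Module k V]
    (ρ : Representation k G V) (N : Submodule k V) (h : ∀ g, ∀ v ∈ N, ρ g v ∈ N) :
    Submodule (MonoidAlgebra k G) ρ.asModule where
  carrier := N.carrier
  add_mem' := N.add_mem
  zero_mem' := N.zero_mem
  smul_mem' := by
    intro r x hx
    show ρ.asAlgebraHom r (ρ.asModuleEquiv x) ∈ N
    induction r using MonoidAlgebra.induction with
    | zero => simpa using N.zero_mem
    | single_add g c f _ _ ih =>
        rw [map_add, LinearMap.add_apply, Representation.asAlgebraHom_single]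
        exact N.add_mem (N.smul_mem c (h g _ hx)) ih

end Helpers2

section Helpers3

variable {k : Type} [Field k]

lemma kleinRep_sigma {V : Type} [AddCommGroup V] [Module k V]
    (S T : Module.End k V) (hS : S * S = 1) (hT : T * T = 1) (hST : S * T = T * S) :
    kleinRep k S T hS hT hST sigma4 = S := by
  show S ^ (toAdd (ofAdd (1 : ZMod 2))).val * T ^ (toAdd (1 : Multiplicative (ZMod 2))).val = S
  rw [show (toAdd (ofAdd (1 : ZMod 2))).val = 1 from by decide,
    show (toAdd (1 : Multiplicative (ZMod 2))).val = 0 from by decide, pow_one, pow_zero, mul_one]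

lemma kleinRep_tau {V : Type} [AddCommGroup V] [Module k V]
    (S T : Module.End k V) (hS : S * S = 1) (hT : T * T = 1) (hST : S * T = T * S) :
    kleinRep k S T hS hT hST tau4 = T := by
  show S ^ (toAdd (1 : Multiplicative (ZMod 2))).val * T ^ (toAdd (ofAdd (1 : ZMod 2))).val = T
  rw [show (toAdd (ofAdd (1 : ZMod 2))).val = 1 from by decide,
    show (toAdd (1 : Multiplicative (ZMod 2))).val = 0 from by decide, pow_one, pow_zero, one_mul]

variable [CharP k 2]

lemma self_add_self {V : Type} [AddCommMonoid V] [Module k V] (v : V) : v + v = 0 := by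
  rw [← two_smul k v, show (2 : k) = 0 from by exact_mod_cast CharP.cast_eq_zero k 2, zero_smul]

lemma add_eq_zero_iff_eq {V : Type} [AddCommMonoid V] [Module k V] {v w : V} :
    v + w = 0 ↔ v = w := by
  constructor
  · intro h
    have := congrArg (· + w) h
    simp only [zero_add] at this
    rw [add_assoc, self_add_self (k := k), add_zero] at this
    exact this
  · rintro rfl; exact self_add_self (k := k) v

lemma pairRep_sigma {I J : Type} (f g : (I → k) →ₗ[k] (J → k)) :
    pairRep k I J f g sigma4 = 1 + auxEnd k f := kleinRep_sigma _ _ _ _ _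

lemma pairRep_tau {I J : Type} (f g : (I → k) →ₗ[k] (J → k)) :
    pairRep k I J f g tau4 = 1 + auxEnd k g := kleinRep_tau _ _ _ _ _

lemma auxEnd_apply {I J : Type} (f : (I → k) →ₗ[k] (J → k)) (x : (I → k) × (J → k)) :
    auxEnd k f x = (0, f x.1) := rfl

lemma pairRep_aElt_smul {I J : Type} (f g : (I → k) →ₗ[k] (J → k))
    (x : (pairRep k I J f g).asModule) :
    (pairRep k I J f g).asModuleEquiv (aElt k • x) =
      (0, f ((pairRep k I J f g).asModuleEquiv x).1) := by
  rw [aElt_smul_asModule, pairRep_sigma]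
  set v := (pairRep k I J f g).asModuleEquiv x
  show (1 + auxEnd k f) v + v = _
  rw [LinearMap.add_apply, Module.End.one_apply, auxEnd_apply, add_comm v, add_assoc,
    self_add_self (k := k) v, add_zero]

lemma pairRep_bElt_smul {I J : Type} (f g : (I → k) →ₗ[k] (J → k))
    (x : (pairRep k I J f g).asModule) :
    (pairRep k I J f g).asModuleEquiv (bElt k • x) =
      (0, g ((pairRep k I J f g).asModuleEquiv x).1) := by
  rw [bElt_smul_asModule, pairRep_tau]
  set v := (pairRep k I J f g).asModuleEquiv x
  show (1 + auxEnd k g) v + v = _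
  rw [LinearMap.add_apply, Module.End.one_apply, auxEnd_apply, add_comm v, add_assoc,
    self_add_self (k := k) v, add_zero]

end Helpers3

section Helpers4

variable {k : Type} [Field k] [CharP k 2]

lemma asModuleEquiv_algebraMap_smul {G V : Type} [Monoid G] [AddCommMonoid V] [Module k V]
    (ρ : Representation k G V) (c : k) (x : ρ.asModule) :
    ρ.asModuleEquiv (algebraMap k (MonoidAlgebra k G) c • x) = c • ρ.asModuleEquiv x := by
  rw [Representation.asModuleEquiv_map_smul, AlgHom.commutes, Module.algebraMap_end_apply]

lemma indec_pair (f g : (Fin 1 → k) →ₗ[k] (Fin 1 → k))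
    (h : ∀ u : Fin 1 → k, f u = 0 → g u = 0 → u = 0) :
    IsIndecomposable (kV4 k) (pairRep k (Fin 1) (Fin 1) f g).asModule := by
  set ρ := pairRep k (Fin 1) (Fin 1) f g
  set s : ρ.asModule := ρ.asModuleEquiv.symm (0, fun _ => (1 : k)) with hs_def
  apply indec_of_socle s
  · intro hcon
    have := congrArg ρ.asModuleEquiv hcon
    rw [LinearEquiv.apply_symm_apply, map_zero] at this
    have := congrFun (congrArg Prod.snd this) 0
    exact one_ne_zero this
  · intro m ha hb
    set v := ρ.asModuleEquiv m with hv
    have hfa : f v.1 = 0 := by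
      have := pairRep_aElt_smul f g m
      rw [ha, map_zero] at this
      exact (congrArg Prod.snd this).symm
    have hgb : g v.1 = 0 := by
      have := pairRep_bElt_smul f g m
      rw [hb, map_zero] at this
      exact (congrArg Prod.snd this).symm
    have hv1 : v.1 = 0 := h _ hfa hgb
    refine ⟨v.2 0, ?_⟩
    apply ρ.asModuleEquiv.injective
    rw [asModuleEquiv_algebraMap_smul, LinearEquiv.apply_symm_apply, ← hv]
    have : v = (v.1, v.2) := rfl
    rw [this, hv1, Prod.smul_mk, Prod.ext_iff]
    constructor
    · simp
    · funext j
      have : j = 0 := Subsingleton.elim _ _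
      rw [this]
      simp

lemma indec_EtMod : IsIndecomposable (kV4 k) (EtMod k) :=
  indec_pair _ _ (fun u hu _ => hu)

lemma indec_Et1Mod : IsIndecomposable (kV4 k) (Et1Mod k) :=
  indec_pair _ _ (fun u hu _ => hu)

lemma indec_EinfMod : IsIndecomposable (kV4 k) (EinfMod k) :=
  indec_pair _ _ (fun u _ hu => hu)

lemma indec_trivMod : IsIndecomposable (kV4 k) (trivMod k) := by
  set ρ := Representation.trivial k (G := V4) (V := k)
  set s : trivMod k := ρ.asModuleEquiv.symm 1
  apply indec_of_socle s
  · intro hcon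
    have := congrArg ρ.asModuleEquiv hcon
    rw [LinearEquiv.apply_symm_apply, map_zero] at this
    exact one_ne_zero this
  · intro m _ _
    refine ⟨ρ.asModuleEquiv m, ?_⟩
    apply ρ.asModuleEquiv.injective
    rw [asModuleEquiv_algebraMap_smul, LinearEquiv.apply_symm_apply, smul_eq_mul, mul_one]

end Helpers4

section Helpers5

variable {k : Type} [Field k] [CharP k 2]

open MonoidAlgebra

lemma aElt_eq_single : aElt k = single sigma4 1 + single 1 1 := by
  rw [aElt, MonoidAlgebra.of_apply, MonoidAlgebra.one_def]

lemma bElt_eq_single : bElt k = single tau4 1 + single 1 1 := by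
  rw [bElt, MonoidAlgebra.of_apply, MonoidAlgebra.one_def]

lemma ab_expand : aElt k * bElt k =
    single (sigma4 * tau4) 1 + single sigma4 1 + single tau4 1 + single 1 1 := by
  rw [aElt_eq_single, bElt_eq_single, add_mul, mul_add, mul_add,
    MonoidAlgebra.single_mul_single, MonoidAlgebra.single_mul_single,
    MonoidAlgebra.single_mul_single, MonoidAlgebra.single_mul_single]
  simp only [mul_one, one_mul]
  ring

lemma ab_apply (g : V4) : (aElt k * bElt k).coeff g = 1 := by
  rcases V4_cases g with h | h | h | h <;> subst h <;> rw [ab_expand] <;>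
      simp only [MonoidAlgebra.coeff_add, MonoidAlgebra.coeff_single, Finsupp.add_apply]
  · rw [Finsupp.single_eq_of_ne' (by decide), Finsupp.single_eq_of_ne' (by decide),
      Finsupp.single_eq_of_ne' (by decide), Finsupp.single_eq_same]; ring
  · rw [Finsupp.single_eq_of_ne' (by decide), Finsupp.single_eq_same,
      Finsupp.single_eq_of_ne' (by decide), Finsupp.single_eq_of_ne' (by decide)]; ring
  · rw [Finsupp.single_eq_of_ne' (by decide), Finsupp.single_eq_of_ne' (by decide),
      Finsupp.single_eq_same, Finsupp.single_eq_of_ne' (by decide)]; ring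
  · rw [Finsupp.single_eq_same, Finsupp.single_eq_of_ne' (by decide),
      Finsupp.single_eq_of_ne' (by decide), Finsupp.single_eq_of_ne' (by decide)]; ring

lemma indec_kV4 : IsIndecomposable (kV4 k) (kV4 k) := by
  apply indec_of_socle (aElt k * bElt k)
  · intro hcon
    have : (aElt k * bElt k).coeff (1 : V4) = (0 : kV4 k).coeff (1 : V4) := by rw [hcon]
    rw [ab_apply] at this
    simp only [MonoidAlgebra.coeff_zero, Finsupp.coe_zero, Pi.zero_apply] at this
    exact one_ne_zero this
  · intro m ha hb
    rw [smul_eq_mul] at ha hb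
    have hσ : ∀ g : V4, m.coeff (sigma4 * g) = m.coeff g := by
      intro g
      have h1 : (aElt k * m).coeff g = 0 := by rw [ha]; rfl
      rw [aElt_eq_single, add_mul, MonoidAlgebra.coeff_add, Finsupp.add_apply,
        MonoidAlgebra.coeff_single_mul_apply, MonoidAlgebra.coeff_single_mul_apply, one_mul, one_mul, inv_one, one_mul] at h1
      have := (add_eq_zero_iff_eq (k := k)).mp h1
      rwa [show sigma4⁻¹ = sigma4 from by decide] at this
    have hτ : ∀ g : V4, m.coeff (tau4 * g) = m.coeff g := by
      intro g
      have h1 : (bElt k * m).coeff g = 0 := by rw [hb]; rfl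
      rw [bElt_eq_single, add_mul, MonoidAlgebra.coeff_add, Finsupp.add_apply,
        MonoidAlgebra.coeff_single_mul_apply, MonoidAlgebra.coeff_single_mul_apply, one_mul, one_mul, inv_one, one_mul] at h1
      have := (add_eq_zero_iff_eq (k := k)).mp h1
      rwa [show tau4⁻¹ = tau4 from by decide] at this
    refine ⟨m.coeff 1, ?_⟩
    rw [smul_eq_mul, ← Algebra.smul_def]
    ext g
    rw [MonoidAlgebra.coeff_smul, Finsupp.smul_apply, ab_apply, smul_eq_mul, mul_one]
    rcases V4_cases g with h | h | h | h <;> subst h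
    · rfl
    · rw [← mul_one sigma4, hσ]
    · rw [← mul_one tau4, hτ]
    · rw [hσ, ← mul_one tau4, hτ]

end Helpers5

section Helpers6

lemma mem_zpowers_invol {g x : V4} (hg : g * g = 1) :
    x ∈ Subgroup.zpowers g ↔ x = 1 ∨ x = g := by
  constructor
  · intro hx
    rw [Subgroup.zpowers_eq_closure] at hx
    induction hx using Subgroup.closure_induction with
    | mem y hy => right; simpa using hy
    | one => left; rfl
    | mul y z _ _ hy hz =>
        rcases hy with rfl | rfl <;> rcases hz with rfl | rfl
        · left; rw [one_mul]
        · right; rw [one_mul]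
        · right; rw [mul_one]
        · left; exact hg
    | inv y _ hy =>
        rcases hy with rfl | rfl
        · left; rw [inv_one]
        · right; exact inv_eq_of_mul_eq_one_right hg
  · rintro (rfl | rfl)
    · exact Subgroup.one_mem _
    · exact Subgroup.mem_zpowers _

lemma subgroup_classify (H : Subgroup V4) :
    H = ⊥ ∨ H = ⊤ ∨ H = Subgroup.zpowers sigma4 ∨ H = Subgroup.zpowers tau4 ∨
      H = Subgroup.zpowers (sigma4 * tau4) := by
  by_cases hσ : sigma4 ∈ H <;> by_cases hτ : tau4 ∈ H
  · right; left
    ext x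
    simp only [Subgroup.mem_top, iff_true]
    rcases V4_cases x with rfl | rfl | rfl | rfl
    · exact H.one_mem
    · exact hσ
    · exact hτ
    · exact H.mul_mem hσ hτ
  · right; right; left
    ext x
    rw [mem_zpowers_invol sigma4_mul_self]
    constructor
    · intro hx
      rcases V4_cases x with rfl | rfl | rfl | rfl
      · left; rfl
      · right; rfl
      · exact absurd hx hτ
      · have h2 := H.mul_mem hσ hx
        rw [show sigma4 * (sigma4 * tau4) = tau4 from by decide] at h2
        exact absurd h2 hτ
    · rintro (rfl | rfl)
      · exact H.one_mem
      · exact hσ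
  · right; right; right; left
    ext x
    rw [mem_zpowers_invol tau4_mul_self]
    constructor
    · intro hx
      rcases V4_cases x with rfl | rfl | rfl | rfl
      · left; rfl
      · exact absurd hx hσ
      · right; rfl
      · have h2 := H.mul_mem hτ hx
        rw [show tau4 * (sigma4 * tau4) = sigma4 from by decide] at h2
        exact absurd h2 hσ
    · rintro (rfl | rfl)
      · exact H.one_mem
      · exact hτ
  · by_cases hστ : sigma4 * tau4 ∈ H
    · right; right; right; right
      ext x
      rw [mem_zpowers_invol (show (sigma4 * tau4) * (sigma4 * tau4) = 1 from by decide)]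
      constructor
      · intro hx
        rcases V4_cases x with rfl | rfl | rfl | rfl
        · left; rfl
        · exact absurd hx hσ
        · exact absurd hx hτ
        · right; rfl
      · rintro (rfl | rfl)
        · exact H.one_mem
        · exact hστ
    · left
      ext x
      simp only [Subgroup.mem_bot]
      constructor
      · intro hx
        rcases V4_cases x with rfl | rfl | rfl | rfl
        · rfl
        · exact absurd hx hσ
        · exact absurd hx hτ
        · exact absurd hx hστ
      · rintro rfl; exact H.one_mem

end Helpers6

section Helpers7

variable {k : Type} [Field k]

open MonoidAlgebra QuotientGroup

/-- Linear equivalence onto finsupps on a two-element type. -/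
noncomputable def basis2Equiv {Q : Type} (c0 c1 : Q) (hne : c0 ≠ c1)
    (hQ : ∀ x : Q, x = c0 ∨ x = c1) [CharP k 2] :
    ((Fin 1 → k) × (Fin 1 → k)) ≃ₗ[k] MonoidAlgebra k Q where
  toFun p := MonoidAlgebra.single c0 (p.1 0 + p.2 0) + MonoidAlgebra.single c1 (p.2 0)
  map_add' p q := by
    simp only [Prod.fst_add, Prod.snd_add, Pi.add_apply, MonoidAlgebra.single_add]
    abel
  map_smul' c p := by
    simp only [Prod.smul_fst, Prod.smul_snd, Pi.smul_apply, smul_eq_mul, RingHom.id_apply,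
      smul_add, MonoidAlgebra.smul_single, smul_eq_mul, mul_add]
  invFun f := (fun _ => f.coeff c0 + f.coeff c1, fun _ => f.coeff c1)
  left_inv p := by
    classical
    simp only [MonoidAlgebra.coeff_add, MonoidAlgebra.coeff_single, Finsupp.add_apply,
      Finsupp.single_eq_same, Finsupp.single_eq_of_ne' hne,
      Finsupp.single_eq_of_ne' (Ne.symm hne), Finsupp.single_eq_same, add_zero, zero_add]
    refine Prod.ext ?_ ?_
    · funext j
      have hj : j = 0 := Subsingleton.elim _ _
      rw [hj]
      show p.1 0 + p.2 0 + p.2 0 = p.1 0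
      rw [add_assoc, self_add_self (k := k), add_zero]
    · funext j
      have hj : j = 0 := Subsingleton.elim _ _
      rw [hj]
  right_inv f := by
    classical
    ext x
    simp only [MonoidAlgebra.coeff_add, MonoidAlgebra.coeff_single, Finsupp.add_apply]
    rcases hQ x with rfl | rfl
    · rw [Finsupp.single_eq_same, Finsupp.single_eq_of_ne' (Ne.symm hne), add_zero, add_assoc,
        self_add_self (k := k), add_zero]
    · rw [Finsupp.single_eq_same, Finsupp.single_eq_of_ne' hne, zero_add]

lemma basis2Equiv_apply {Q : Type} (c0 c1 : Q) (hne : c0 ≠ c1)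
    (hQ : ∀ x : Q, x = c0 ∨ x = c1) [CharP k 2] (u v : Fin 1 → k) :
    basis2Equiv (k := k) c0 c1 hne hQ (u, v) =
      MonoidAlgebra.single c0 (u 0 + v 0) + MonoidAlgebra.single c1 (v 0) := rfl

lemma pairRep_sigma_apply {I J : Type} [CharP k 2] (f g : (I → k) →ₗ[k] (J → k))
    (p : (I → k) × (J → k)) :
    pairRep k I J f g sigma4 p = (p.1, p.2 + f p.1) := by
  rw [pairRep_sigma, LinearMap.add_apply, Module.End.one_apply, auxEnd_apply]
  exact Prod.ext (by simp) (by simp [add_comm])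

lemma pairRep_tau_apply {I J : Type} [CharP k 2] (f g : (I → k) →ₗ[k] (J → k))
    (p : (I → k) × (J → k)) :
    pairRep k I J f g tau4 p = (p.1, p.2 + g p.1) := by
  rw [pairRep_tau, LinearMap.add_apply, Module.End.one_apply, auxEnd_apply]
  exact Prod.ext (by simp) (by simp [add_comm])

lemma EbMap_zero : EbMap k 1 0 = 0 := by
  apply LinearMap.ext
  intro u
  funext j
  have hj : j = 0 := Subsingleton.elim _ _
  subst hj
  simp [EbMap, LinearMap.pi_apply]

lemma EbMap_one : EbMap k 1 1 = LinearMap.id := by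
  apply LinearMap.ext
  intro u
  funext j
  have hj : j = 0 := Subsingleton.elim _ _
  subst hj
  simp [EbMap, LinearMap.pi_apply]

lemma EinfaMap_one : EinfaMap k 1 = 0 := by
  apply LinearMap.ext
  intro u
  funext j
  have hj : j = 0 := Subsingleton.elim _ _
  subst hj
  simp [EinfaMap, LinearMap.pi_apply]

end Helpers7

section Helpers8

variable {k : Type} [Field k]

open MonoidAlgebra QuotientGroup Representation

/-- Module isomorphism induced by an equivariant bijection of `V₄`-sets. -/
noncomputable def ofMulActionEquiv {X Y : Type} [MulAction V4 X] [MulAction V4 Y]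
    (e : X ≃ Y) (he : ∀ (g : V4) (x : X), e (g • x) = g • e x) :
    (Representation.ofMulAction k V4 X).asModule ≃ₗ[kV4 k]
      (Representation.ofMulAction k V4 Y).asModule := by
  refine reprEquiv _ _ (MonoidAlgebra.mapDomainLinearEquiv k k e) ?_
  intro g f
  induction f using MonoidAlgebra.induction with
  | zero => simp
  | single_add x c f _ _ ih =>
      rw [map_add, map_add, map_add, ih, map_add]
      congr 1
      rw [Representation.ofMulAction_single, MonoidAlgebra.mapDomainLinearEquiv_single,
        MonoidAlgebra.mapDomainLinearEquiv_single,
        Representation.ofMulAction_single, he]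

/-- `k[V₄/V₄]` is the trivial module. -/
noncomputable def trivIso :
    trivMod k ≃ₗ[kV4 k]
      (Representation.ofMulAction k V4 (V4 ⧸ (⊤ : Subgroup V4))).asModule := by
  letI : Subsingleton (V4 ⧸ (⊤ : Subgroup V4)) := QuotientGroup.subsingleton_quotient_top
  letI : Unique (V4 ⧸ (⊤ : Subgroup V4)) :=
    ⟨⟨((1 : V4) : V4 ⧸ (⊤ : Subgroup V4))⟩, fun x => Subsingleton.elim _ _⟩
  refine reprEquiv _ _ (MonoidAlgebra.uniqueLinearEquiv k (V4 ⧸ (⊤ : Subgroup V4))).symm ?_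
  intro g v
  have h1 : Representation.trivial k (G := V4) (V := k) g v = v := rfl
  rw [h1]
  ext x
  rw [Representation.coeff_ofMulAction]
  congr 1
  exact Subsingleton.elim _ _

/-- `k[V₄/1]` is the regular module. -/
noncomputable def regIso :
    kV4 k ≃ₗ[kV4 k]
      (Representation.ofMulAction k V4 (V4 ⧸ (⊥ : Subgroup V4))).asModule := by
  refine (Representation.ofMulActionSelfAsModuleEquiv (k := k) (G := V4)).symm.trans
    (ofMulActionEquiv (Equiv.ofBijective (QuotientGroup.mk) ⟨?_, ?_⟩) ?_)
  · intro x y hxy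
    have : x⁻¹ * y = 1 := by
      have h2 := QuotientGroup.eq.mp hxy
      rwa [Subgroup.mem_bot] at h2
    exact inv_mul_eq_one.mp this
  · intro q
    exact QuotientGroup.induction_on q (fun z => ⟨z, rfl⟩)
  · intro g x
    rfl

end Helpers8

section Helpers9

variable {k : Type} [Field k] [CharP k 2]

open MonoidAlgebra QuotientGroup Representation

lemma ch2_aux (x y : k) : x + (y + x) = y := by
  rw [add_comm y x, ← add_assoc, self_add_self (k := k), zero_add]

lemma mem_zp (g x : V4) (h : x = g) : x ∈ Subgroup.zpowers g := h ▸ Subgroup.mem_zpowers g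

lemma equivariant_swap {Q : Type} [MulAction V4 Q] (c0 c1 : Q) (hne : c0 ≠ c1)
    (hQ : ∀ x : Q, x = c0 ∨ x = c1) (g : V4) (h0 : g • c0 = c1) (h1 : g • c1 = c0)
    (u v : Fin 1 → k) :
    basis2Equiv (k := k) c0 c1 hne hQ (u, v + u) =
      Representation.ofMulAction k V4 Q g (basis2Equiv (k := k) c0 c1 hne hQ (u, v)) := by
  rw [basis2Equiv_apply, basis2Equiv_apply, map_add, Representation.ofMulAction_single,
    Representation.ofMulAction_single, h0, h1]
  simp only [Pi.add_apply]
  rw [show u 0 + (v 0 + u 0) = v 0 from ch2_aux _ _, add_comm (v 0) (u 0), add_comm]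

lemma equivariant_fix {Q : Type} [MulAction V4 Q] (c0 c1 : Q) (hne : c0 ≠ c1)
    (hQ : ∀ x : Q, x = c0 ∨ x = c1) (g : V4) (h0 : g • c0 = c0) (h1 : g • c1 = c1)
    (u v : Fin 1 → k) :
    basis2Equiv (k := k) c0 c1 hne hQ (u, v) =
      Representation.ofMulAction k V4 Q g (basis2Equiv (k := k) c0 c1 hne hQ (u, v)) := by
  conv_rhs => rw [basis2Equiv_apply, map_add, Representation.ofMulAction_single,
    Representation.ofMulAction_single, h0, h1]
  exact basis2Equiv_apply _ _ _ _ _ _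

/-- `k[V₄/⟨τ⟩] ≅ E_t`. -/
noncomputable def etIso :
    EtMod k ≃ₗ[kV4 k]
      (Representation.ofMulAction k V4 (V4 ⧸ Subgroup.zpowers tau4)).asModule := by
  set H := Subgroup.zpowers tau4 with hH
  set c0 : V4 ⧸ H := ((1 : V4) : V4 ⧸ H) with hc0
  set c1 : V4 ⧸ H := ((sigma4 : V4) : V4 ⧸ H) with hc1
  have hne : c0 ≠ c1 := by
    intro h
    have h2 := QuotientGroup.eq.mp h
    rw [inv_one, one_mul, mem_zpowers_invol tau4_mul_self] at h2
    rcases h2 with h2 | h2 <;> exact absurd h2 (by decide)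
  have hQ : ∀ x : V4 ⧸ H, x = c0 ∨ x = c1 := by
    intro x
    refine QuotientGroup.induction_on x ?_
    intro z
    rcases V4_cases z with rfl | rfl | rfl | rfl
    · left; rfl
    · right; rfl
    · left; exact QuotientGroup.eq.mpr (mem_zp _ _ (by decide))
    · right; exact QuotientGroup.eq.mpr (mem_zp _ _ (by decide))
  have hσ0 : sigma4 • c0 = c1 := by rw [hc0, MulAction.Quotient.smul_mk, smul_eq_mul, mul_one]
  have hσ1 : sigma4 • c1 = c0 := by
    rw [hc1, MulAction.Quotient.smul_mk, smul_eq_mul, sigma4_mul_self]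
  have hτ0 : tau4 • c0 = c0 := by
    rw [hc0, MulAction.Quotient.smul_mk, smul_eq_mul]
    exact QuotientGroup.eq.mpr (mem_zp _ _ (by decide))
  have hτ1 : tau4 • c1 = c1 := by
    rw [hc1, MulAction.Quotient.smul_mk, smul_eq_mul]
    exact QuotientGroup.eq.mpr (mem_zp _ _ (by decide))
  refine reprEquiv _ _ (basis2Equiv (k := k) c0 c1 hne hQ) ?_
  refine equivariance_of_gen _ _ (basis2Equiv (k := k) c0 c1 hne hQ).toLinearMap ?_ ?_
  · rintro ⟨u, v⟩
    have h1 : ERep k 1 0 sigma4 (u, v) = (u, v + u) := by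
      show pairRep k (Fin 1) (Fin 1) LinearMap.id (EbMap k 1 0) sigma4 (u, v) = _
      rw [pairRep_sigma_apply]
      rfl
    rw [h1]
    exact equivariant_swap c0 c1 hne hQ sigma4 hσ0 hσ1 u v
  · rintro ⟨u, v⟩
    have h1 : ERep k 1 0 tau4 (u, v) = (u, v) := by
      show pairRep k (Fin 1) (Fin 1) LinearMap.id (EbMap k 1 0) tau4 (u, v) = _
      rw [pairRep_tau_apply, EbMap_zero]
      simp
    rw [h1]
    exact equivariant_fix c0 c1 hne hQ tau4 hτ0 hτ1 u v

/-- `k[V₄/⟨στ⟩] ≅ E_{t+1}`. -/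
noncomputable def et1Iso :
    Et1Mod k ≃ₗ[kV4 k]
      (Representation.ofMulAction k V4 (V4 ⧸ Subgroup.zpowers (sigma4 * tau4))).asModule := by
  set H := Subgroup.zpowers (sigma4 * tau4) with hH
  set c0 : V4 ⧸ H := ((1 : V4) : V4 ⧸ H) with hc0
  set c1 : V4 ⧸ H := ((sigma4 : V4) : V4 ⧸ H) with hc1
  have hne : c0 ≠ c1 := by
    intro h
    have h2 := QuotientGroup.eq.mp h
    rw [inv_one, one_mul,
      mem_zpowers_invol (show (sigma4 * tau4) * (sigma4 * tau4) = 1 from by decide)] at h2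
    rcases h2 with h2 | h2 <;> exact absurd h2 (by decide)
  have hQ : ∀ x : V4 ⧸ H, x = c0 ∨ x = c1 := by
    intro x
    refine QuotientGroup.induction_on x ?_
    intro z
    rcases V4_cases z with rfl | rfl | rfl | rfl
    · left; rfl
    · right; rfl
    · right; exact QuotientGroup.eq.mpr (mem_zp _ _ (by decide))
    · left; exact QuotientGroup.eq.mpr (mem_zp _ _ (by decide))
  have hσ0 : sigma4 • c0 = c1 := by rw [hc0, MulAction.Quotient.smul_mk, smul_eq_mul, mul_one]
  have hσ1 : sigma4 • c1 = c0 := by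
    rw [hc1, MulAction.Quotient.smul_mk, smul_eq_mul, sigma4_mul_self]
  have hτ0 : tau4 • c0 = c1 := by
    rw [hc0, MulAction.Quotient.smul_mk, smul_eq_mul]
    exact QuotientGroup.eq.mpr (mem_zp _ _ (by decide))
  have hτ1 : tau4 • c1 = c0 := by
    rw [hc1, MulAction.Quotient.smul_mk, smul_eq_mul]
    exact QuotientGroup.eq.mpr (mem_zp _ _ (by decide))
  refine reprEquiv _ _ (basis2Equiv (k := k) c0 c1 hne hQ) ?_
  refine equivariance_of_gen _ _ (basis2Equiv (k := k) c0 c1 hne hQ).toLinearMap ?_ ?_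
  · rintro ⟨u, v⟩
    have h1 : ERep k 1 1 sigma4 (u, v) = (u, v + u) := by
      show pairRep k (Fin 1) (Fin 1) LinearMap.id (EbMap k 1 1) sigma4 (u, v) = _
      rw [pairRep_sigma_apply]
      rfl
    rw [h1]
    exact equivariant_swap c0 c1 hne hQ sigma4 hσ0 hσ1 u v
  · rintro ⟨u, v⟩
    have h1 : ERep k 1 1 tau4 (u, v) = (u, v + u) := by
      show pairRep k (Fin 1) (Fin 1) LinearMap.id (EbMap k 1 1) tau4 (u, v) = _
      rw [pairRep_tau_apply, EbMap_one]
      rfl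
    rw [h1]
    exact equivariant_swap c0 c1 hne hQ tau4 hτ0 hτ1 u v

/-- `k[V₄/⟨σ⟩] ≅ E_∞`. -/
noncomputable def einfIso :
    EinfMod k ≃ₗ[kV4 k]
      (Representation.ofMulAction k V4 (V4 ⧸ Subgroup.zpowers sigma4)).asModule := by
  set H := Subgroup.zpowers sigma4 with hH
  set c0 : V4 ⧸ H := ((1 : V4) : V4 ⧸ H) with hc0
  set c1 : V4 ⧸ H := ((tau4 : V4) : V4 ⧸ H) with hc1
  have hne : c0 ≠ c1 := by
    intro h
    have h2 := QuotientGroup.eq.mp h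
    rw [inv_one, one_mul, mem_zpowers_invol sigma4_mul_self] at h2
    rcases h2 with h2 | h2 <;> exact absurd h2 (by decide)
  have hQ : ∀ x : V4 ⧸ H, x = c0 ∨ x = c1 := by
    intro x
    refine QuotientGroup.induction_on x ?_
    intro z
    rcases V4_cases z with rfl | rfl | rfl | rfl
    · left; rfl
    · left; exact QuotientGroup.eq.mpr (mem_zp _ _ (by decide))
    · right; rfl
    · right; exact QuotientGroup.eq.mpr (mem_zp _ _ (by decide))
  have hσ0 : sigma4 • c0 = c0 := by
    rw [hc0, MulAction.Quotient.smul_mk, smul_eq_mul]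
    exact QuotientGroup.eq.mpr (mem_zp _ _ (by decide))
  have hσ1 : sigma4 • c1 = c1 := by
    rw [hc1, MulAction.Quotient.smul_mk, smul_eq_mul]
    exact QuotientGroup.eq.mpr (mem_zp _ _ (by decide))
  have hτ0 : tau4 • c0 = c1 := by rw [hc0, MulAction.Quotient.smul_mk, smul_eq_mul, mul_one]
  have hτ1 : tau4 • c1 = c0 := by
    rw [hc1, MulAction.Quotient.smul_mk, smul_eq_mul, tau4_mul_self]
  refine reprEquiv _ _ (basis2Equiv (k := k) c0 c1 hne hQ) ?_
  refine equivariance_of_gen _ _ (basis2Equiv (k := k) c0 c1 hne hQ).toLinearMap ?_ ?_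
  · rintro ⟨u, v⟩
    have h1 : EinfRep k 1 sigma4 (u, v) = (u, v) := by
      show pairRep k (Fin 1) (Fin 1) (EinfaMap k 1) LinearMap.id sigma4 (u, v) = _
      rw [pairRep_sigma_apply, EinfaMap_one]
      simp
    rw [h1]
    exact equivariant_fix c0 c1 hne hQ sigma4 hσ0 hσ1 u v
  · rintro ⟨u, v⟩
    have h1 : EinfRep k 1 tau4 (u, v) = (u, v + u) := by
      show pairRep k (Fin 1) (Fin 1) (EinfaMap k 1) LinearMap.id tau4 (u, v) = _
      rw [pairRep_tau_apply]
      rfl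
    rw [h1]
    exact equivariant_swap c0 c1 hne hQ tau4 hτ0 hτ1 u v

end Helpers9

section Helpers10

variable {k : Type} [Field k]

open Representation

lemma mem_invariantSubmodule {G V : Type} [Monoid G] [AddCommMonoid V] [Module k V]
    (ρ : Representation k G V) (N : Submodule k V) (h : ∀ g, ∀ v ∈ N, ρ g v ∈ N)
    (x : ρ.asModule) : x ∈ invariantSubmodule ρ N h ↔ ρ.asModuleEquiv x ∈ N := Iff.rfl

lemma perm_indec_to_quot [CharP k 2] {M : Type} [AddCommMonoid M] [Module (kV4 k) M]
    (hperm : IsPermMod k M) (hind : IsIndecomposable (kV4 k) M) :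
    ∃ H : Subgroup V4,
      Nonempty (M ≃ₗ[kV4 k] (Representation.ofMulAction k V4 (V4 ⧸ H)).asModule) := by
  classical
  obtain ⟨ι, fι, act, ⟨e⟩⟩ := hperm
  letI := act
  set ρ := Representation.ofMulAction k V4 ι with hρ
  have hindP : IsIndecomposable (kV4 k) ρ.asModule := isIndecomposable_of_equiv e.symm hind
  have hne : Nonempty ι := by
    by_contra hcon
    rw [not_nonempty_iff] at hcon
    haveI : Subsingleton (MonoidAlgebra k ι) :=
      ⟨fun f g => MonoidAlgebra.coeff_injective (Finsupp.ext fun a => isEmptyElim a)⟩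
    haveI : Subsingleton ρ.asModule := by
      constructor
      intro f g
      exact Subsingleton.elim (α := MonoidAlgebra k ι) f g
    obtain ⟨x, y, hxy⟩ := hindP.1
    exact hxy (Subsingleton.elim x y)
  obtain ⟨i0⟩ := hne
  set S : Set ι := MulAction.orbit V4 i0 with hS
  -- invariance of S and Sᶜ
  have hinv : ∀ (g : V4) (x : ι), x ∈ S → g • x ∈ S := by
    intro g x hx
    obtain ⟨h, rfl⟩ := hx
    exact ⟨g * h, by show (g * h) • i0 = _; rw [mul_smul]⟩
  have hinvc : ∀ (g : V4) (x : ι), x ∈ Sᶜ → g • x ∈ Sᶜ := by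
    intro g x hx hmem
    apply hx
    obtain ⟨h, hh⟩ := hmem
    refine ⟨g⁻¹ * h, ?_⟩
    show (g⁻¹ * h) • i0 = x
    have hh' : h • i0 = g • x := hh
    rw [mul_smul, hh', inv_smul_smul]
  -- invariance of the supported submodules
  have key : ∀ (T : Set ι), (∀ (g : V4) (x : ι), x ∈ T → g • x ∈ T) →
      ∀ (g : V4), ∀ v ∈ MonoidAlgebra.supported k k T, ρ g v ∈ MonoidAlgebra.supported k k T := by
    intro T hT g v hv
    rw [MonoidAlgebra.mem_supported] at hv ⊢
    have hgv : (ρ g v).coeff = Finsupp.mapDomain (g • ·) v.coeff := by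
      rw [hρ, Representation.ofMulAction_def]; rfl
    rw [hgv]
    refine subset_trans (Finset.coe_subset.mpr Finsupp.mapDomain_support) ?_
    intro x hx
    simp only [Finset.coe_image, Set.mem_image, Finset.mem_coe] at hx
    obtain ⟨y, hy, rfl⟩ := hx
    exact hT g y (hv hy)
  set N1 := invariantSubmodule ρ (MonoidAlgebra.supported k k S) (key S hinv) with hN1
  set N2 := invariantSubmodule ρ (MonoidAlgebra.supported k k Sᶜ) (key Sᶜ hinvc) with hN2
  have hcompl : IsCompl N1 N2 := by
    constructor
    · rw [disjoint_iff_inf_le]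
      rintro f ⟨hf1, hf2⟩
      replace hf1 : ↑(ρ.asModuleEquiv f).coeff.support ⊆ S := by
        have h' : ρ.asModuleEquiv f ∈ MonoidAlgebra.supported k k S := hf1
        rwa [MonoidAlgebra.mem_supported] at h'
      replace hf2 : ↑(ρ.asModuleEquiv f).coeff.support ⊆ Sᶜ := by
        have h' : ρ.asModuleEquiv f ∈ MonoidAlgebra.supported k k Sᶜ := hf2
        rwa [MonoidAlgebra.mem_supported] at h'
      show f ∈ (⊥ : Submodule (kV4 k) ρ.asModule)
      rw [Submodule.mem_bot]
      apply ρ.asModuleEquiv.injective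
      rw [map_zero]
      ext a
      by_contra hcon
      have ha : a ∈ (ρ.asModuleEquiv f).coeff.support := Finsupp.mem_support_iff.mpr hcon
      exact (hf2 ha) (hf1 ha)
    · rw [codisjoint_iff_le_sup]
      intro f _
      set v : ι →₀ k := (ρ.asModuleEquiv f).coeff with hv
      have hsplit : v = v.filter (· ∈ S) + v.filter (fun a => ¬ a ∈ S) := by
        rw [Finsupp.filter_pos_add_filter_neg]
      have hf1 : ρ.asModuleEquiv.symm (MonoidAlgebra.ofCoeff (v.filter (· ∈ S))) ∈ N1 := by
        rw [mem_invariantSubmodule, LinearEquiv.apply_symm_apply, MonoidAlgebra.mem_supported]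
        intro a ha
        rw [Finsupp.support_filter, Finset.mem_coe, Finset.mem_filter] at ha
        exact ha.2
      have hf2 : ρ.asModuleEquiv.symm (MonoidAlgebra.ofCoeff (v.filter (fun a => ¬ a ∈ S))) ∈ N2 := by
        rw [mem_invariantSubmodule, LinearEquiv.apply_symm_apply, MonoidAlgebra.mem_supported]
        intro a ha
        rw [Finsupp.support_filter, Finset.mem_coe, Finset.mem_filter] at ha
        exact ha.2
      have : f = ρ.asModuleEquiv.symm (MonoidAlgebra.ofCoeff (v.filter (· ∈ S))) +
          ρ.asModuleEquiv.symm (MonoidAlgebra.ofCoeff (v.filter (fun a => ¬ a ∈ S))) := by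
        apply ρ.asModuleEquiv.injective
        rw [map_add, LinearEquiv.apply_symm_apply, LinearEquiv.apply_symm_apply,
          ← MonoidAlgebra.coeff_inj, MonoidAlgebra.coeff_add, MonoidAlgebra.coeff_ofCoeff,
          MonoidAlgebra.coeff_ofCoeff, ← hsplit]
      rw [this]
      exact Submodule.add_mem _ (Submodule.mem_sup_left hf1) (Submodule.mem_sup_right hf2)
  have hN1ne : N1 ≠ ⊥ := by
    intro hbot
    have hmem : ρ.asModuleEquiv.symm (MonoidAlgebra.single i0 1) ∈ N1 := by
      rw [mem_invariantSubmodule, LinearEquiv.apply_symm_apply, MonoidAlgebra.mem_supported]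
      intro a ha
      rw [Finset.mem_coe, Finsupp.mem_support_iff] at ha
      have : a = i0 := by
        by_contra hcon
        exact ha (Finsupp.single_eq_of_ne' (Ne.symm hcon))
      rw [this]
      exact MulAction.mem_orbit_self i0
    rw [hbot, Submodule.mem_bot] at hmem
    have := congrArg ρ.asModuleEquiv hmem
    rw [LinearEquiv.apply_symm_apply, map_zero] at this
    have := DFunLike.congr_fun (congrArg MonoidAlgebra.coeff this) i0
    rw [MonoidAlgebra.coeff_single, Finsupp.single_eq_same] at this
    exact one_ne_zero this
  have hN2bot : N2 = ⊥ := by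
    rcases hindP.2 N1 N2 hcompl with h | h
    · exact absurd h hN1ne
    · exact h
  have htrans : ∀ j : ι, j ∈ S := by
    intro j
    by_contra hj
    have hmem : ρ.asModuleEquiv.symm (MonoidAlgebra.single j 1) ∈ N2 := by
      rw [mem_invariantSubmodule, LinearEquiv.apply_symm_apply, MonoidAlgebra.mem_supported]
      intro a ha
      rw [Finset.mem_coe, Finsupp.mem_support_iff] at ha
      have : a = j := by
        by_contra hcon
        exact ha (Finsupp.single_eq_of_ne' (Ne.symm hcon))
      rw [this]
      exact hj
    rw [hN2bot, Submodule.mem_bot] at hmem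
    have := congrArg ρ.asModuleEquiv hmem
    rw [LinearEquiv.apply_symm_apply, map_zero] at this
    have := DFunLike.congr_fun (congrArg MonoidAlgebra.coeff this) j
    rw [MonoidAlgebra.coeff_single, Finsupp.single_eq_same] at this
    exact one_ne_zero this
  -- the equivariant bijection
  refine ⟨MulAction.stabilizer V4 i0, ?_⟩
  have hbij : Function.Bijective (MulAction.ofQuotientStabilizer V4 i0) := by
    constructor
    · exact MulAction.injective_ofQuotientStabilizer V4 i0
    · intro j
      obtain ⟨g, hg⟩ := htrans j
      exact ⟨QuotientGroup.mk g, by rw [MulAction.ofQuotientStabilizer_mk]; exact hg⟩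
  refine ⟨e.trans (ofMulActionEquiv (Equiv.ofBijective _ hbij) ?_).symm⟩
  intro g x
  exact MulAction.ofQuotientStabilizer_smul V4 i0 g x

end Helpers10

section Helpers11

variable {k : Type} [Field k]

lemma permQuot (H : Subgroup V4) :
    IsPermMod k (Representation.ofMulAction k V4 (V4 ⧸ H)).asModule := by
  haveI : Finite (V4 ⧸ H) := Quotient.finite _
  exact ⟨V4 ⧸ H, Fintype.ofFinite _, inferInstance, ⟨LinearEquiv.refl _ _⟩⟩

variable [CharP k 2]

/-- Any coset module is isomorphic to one of the five modules. -/
lemma quot_to_five {M : Type} [AddCommMonoid M] [Module (kV4 k) M] (H : Subgroup V4)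
    (e : M ≃ₗ[kV4 k] (Representation.ofMulAction k V4 (V4 ⧸ H)).asModule) :
    Nonempty (M ≃ₗ[kV4 k] trivMod k) ∨ Nonempty (M ≃ₗ[kV4 k] EtMod k) ∨
      Nonempty (M ≃ₗ[kV4 k] Et1Mod k) ∨ Nonempty (M ≃ₗ[kV4 k] EinfMod k) ∨
      Nonempty (M ≃ₗ[kV4 k] kV4 k) := by
  rcases subgroup_classify H with rfl | rfl | rfl | rfl | rfl
  · exact Or.inr (Or.inr (Or.inr (Or.inr ⟨e.trans regIso.symm⟩)))
  · exact Or.inl ⟨e.trans trivIso.symm⟩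
  · exact Or.inr (Or.inr (Or.inr (Or.inl ⟨e.trans einfIso.symm⟩)))
  · exact Or.inr (Or.inl ⟨e.trans etIso.symm⟩)
  · exact Or.inr (Or.inr (Or.inl ⟨e.trans et1Iso.symm⟩))

/-- Each of the five modules is an indecomposable permutation module. -/
lemma five_to_perm_indec {M : Type} [AddCommMonoid M] [Module (kV4 k) M]
    (h : Nonempty (M ≃ₗ[kV4 k] trivMod k) ∨ Nonempty (M ≃ₗ[kV4 k] EtMod k) ∨
      Nonempty (M ≃ₗ[kV4 k] Et1Mod k) ∨ Nonempty (M ≃ₗ[kV4 k] EinfMod k) ∨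
      Nonempty (M ≃ₗ[kV4 k] kV4 k)) :
    IsPermMod k M ∧ IsIndecomposable (kV4 k) M := by
  rcases h with h | h | h | h | h <;> obtain ⟨e⟩ := h
  · exact ⟨isPermMod_of_equiv (e.trans trivIso) (permQuot _),
      isIndecomposable_of_equiv e indec_trivMod⟩
  · exact ⟨isPermMod_of_equiv (e.trans etIso) (permQuot _),
      isIndecomposable_of_equiv e indec_EtMod⟩
  · exact ⟨isPermMod_of_equiv (e.trans et1Iso) (permQuot _),
      isIndecomposable_of_equiv e indec_Et1Mod⟩
  · exact ⟨isPermMod_of_equiv (e.trans einfIso) (permQuot _),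
      isIndecomposable_of_equiv e indec_EinfMod⟩
  · exact ⟨isPermMod_of_equiv (e.trans regIso) (permQuot _),
      isIndecomposable_of_equiv e indec_kV4⟩

end Helpers11

-- STATEMENT 2
theorem stmt2 (k : Type) [Field k] [CharP k 2]
    (M : Type) [AddCommMonoid M] [Module (kV4 k) M] :
    ((IsPermMod k M ∧ IsIndecomposable (kV4 k) M) ↔
      (Nonempty (M ≃ₗ[kV4 k] trivMod k) ∨ Nonempty (M ≃ₗ[kV4 k] EtMod k) ∨
       Nonempty (M ≃ₗ[kV4 k] Et1Mod k) ∨ Nonempty (M ≃ₗ[kV4 k] EinfMod k) ∨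
       Nonempty (M ≃ₗ[kV4 k] kV4 k))) ∧
    ((IsPermMod k M ∧ IsIndecomposable (kV4 k) M) ↔
      ∃ H : Subgroup V4,
        Nonempty (M ≃ₗ[kV4 k] (Representation.ofMulAction k V4 (V4 ⧸ H)).asModule)) := by
  constructor
  · constructor
    · rintro ⟨hperm, hind⟩
      obtain ⟨H, ⟨e⟩⟩ := perm_indec_to_quot hperm hind
      exact quot_to_five H e
    · exact five_to_perm_indec
  · constructor
    · rintro ⟨hperm, hind⟩
      exact perm_indec_to_quot hperm hind
    · rintro ⟨H, ⟨e⟩⟩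
      exact five_to_perm_indec (quot_to_five H e)
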